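/- With q1q2q3 = 1 and f(z) = exp(-∑_{n>0} (q1^n + q3^n)/(n(1+q2^{-n})) z^n) viewed as a formal power series in z, one has the identity f(z)·f(q2^{±1} z) = (1 - q1^{∓1} z)(1 - q3^{∓1} z). -/

import Mathlib

open PowerSeries

/-- Exponential of a formal power series (with zero constant term) in ℂ[[z]],
defined coefficientwise: coeff n (exp f) = ∑_{k ≤ n} coeff n (f^k) / k!. -/
noncomputable def expPS (f : PowerSeries ℂ) : PowerSeries ℂ :=
  PowerSeries.mk fun n =>
    ∑ k ∈ Finset.range (n + 1), (PowerSeries.coeff n (f ^ k)) / (Nat.factorial k)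

lemma coeff_pow_eq_zero' {f : PowerSeries ℂ} (hf : constantCoeff f = 0)
    {j k : ℕ} (hjk : j < k) : PowerSeries.coeff j (f ^ k) = 0 := by
  have : (X : PowerSeries ℂ) ^ k ∣ f ^ k := pow_dvd_pow_of_dvd (X_dvd_iff.mpr hf) k
  exact (X_pow_dvd_iff.mp this) j hjk

lemma constantCoeff_expPS (f : PowerSeries ℂ) : constantCoeff (expPS f) = 1 := by
  rw [← coeff_zero_eq_constantCoeff_apply]
  simp [expPS]

lemma rescale_expPS (c : ℂ) (f : PowerSeries ℂ) :
    rescale c (expPS f) = expPS (rescale c f) := by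
  ext n
  simp only [expPS, coeff_rescale, coeff_mk, Finset.mul_sum]
  refine Finset.sum_congr rfl fun k _ => ?_
  rw [← map_pow, coeff_rescale]
  ring

lemma derivative_expPS {f : PowerSeries ℂ} (hf : constantCoeff f = 0) :
    d⁄dX ℂ (expPS f) = d⁄dX ℂ f * expPS f := by
  ext n
  have key : ∀ k : ℕ, PowerSeries.coeff (n+1) (f ^ (k+1)) * (n+1) / (Nat.factorial (k+1))
      = PowerSeries.coeff n (f ^ k * d⁄dX ℂ f) / (Nat.factorial k) := by
    intro k
    have hk1 : ((k:ℂ)+1) ≠ 0 := Nat.cast_add_one_ne_zero k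
    have h1 : d⁄dX ℂ (f ^ (k+1)) = (k+1 : ℕ) • ((f ^ (k+1-1)) • d⁄dX ℂ f) :=
      Derivation.leibniz_pow _ _ (k+1)
    have h2 : PowerSeries.coeff (n+1) (f ^ (k+1)) * (n+1)
        = ((k:ℂ)+1) * PowerSeries.coeff n (f ^ k * d⁄dX ℂ f) := by
      rw [← coeff_derivative, h1]
      simp only [smul_eq_mul, nsmul_eq_mul, Nat.add_sub_cancel]
      rw [← map_natCast (PowerSeries.C (R := ℂ)) (k+1), PowerSeries.coeff_C_mul]
      push_cast
      ring
    rw [h2, Nat.factorial_succ]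
    have hkf : ((Nat.factorial k : ℂ)) ≠ 0 := Nat.cast_ne_zero.mpr (Nat.factorial_ne_zero k)
    push_cast
    field_simp
  -- LHS
  rw [coeff_derivative]
  have hL : PowerSeries.coeff (n+1) (expPS f) * (n+1)
      = ∑ k ∈ Finset.range (n+1), PowerSeries.coeff n (f ^ k * d⁄dX ℂ f) / (Nat.factorial k) := by
    rw [expPS, coeff_mk, Finset.sum_mul]
    have h3 : ∀ k, PowerSeries.coeff (n+1) (f ^ k) / (Nat.factorial k) * (n+1)
        = PowerSeries.coeff (n+1) (f ^ k) * (n+1) / (Nat.factorial k) := fun k => by ring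
    simp_rw [h3]
    rw [Finset.sum_range_succ']
    rw [Finset.sum_congr rfl fun k _ => key k]
    simp
  rw [hL]
  -- RHS
  rw [coeff_mul, Finset.Nat.sum_antidiagonal_eq_sum_range_succ_mk]
  have hext : ∀ i ∈ Finset.range (n+1),
      PowerSeries.coeff i (d⁄dX ℂ f) * PowerSeries.coeff (n - i) (expPS f)
      = ∑ k ∈ Finset.range (n+1),
          PowerSeries.coeff i (d⁄dX ℂ f) * (PowerSeries.coeff (n-i) (f ^ k) / (Nat.factorial k)) := by
    intro i hi
    rw [expPS, coeff_mk, Finset.mul_sum]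
    refine Finset.sum_subset (Finset.range_subset_range.mpr (by omega)) ?_
    intro k hk hk2
    rw [coeff_pow_eq_zero' hf (by simp only [Finset.mem_range] at hk hk2; omega)]
    simp
  rw [Finset.sum_congr rfl hext, Finset.sum_comm]
  refine Finset.sum_congr rfl fun k _ => ?_
  rw [mul_comm (f ^ k), coeff_mul, Finset.Nat.sum_antidiagonal_eq_sum_range_succ_mk,
    Finset.sum_div]
  exact Finset.sum_congr rfl fun i _ => by ring

lemma eq_of_deriv_rel {F G : PowerSeries ℂ}
    (h0 : PowerSeries.coeff 0 F = PowerSeries.coeff 0 G)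
    (hG0 : PowerSeries.coeff 0 G ≠ 0)
    (hd : d⁄dX ℂ F * G = d⁄dX ℂ G * F) : F = G := by
  ext n
  induction n using Nat.strong_induction_on with
  | _ n ih =>
    match n with
    | 0 => exact h0
    | Nat.succ m =>
      have hE := congrArg (PowerSeries.coeff m) hd
      rw [coeff_mul, coeff_mul, Finset.Nat.sum_antidiagonal_eq_sum_range_succ_mk,
        Finset.Nat.sum_antidiagonal_eq_sum_range_succ_mk, Finset.sum_range_succ,
        Finset.sum_range_succ] at hE
      have hsum : ∀ i ∈ Finset.range m,
          PowerSeries.coeff i (d⁄dX ℂ F) * PowerSeries.coeff (m - i) G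
          = PowerSeries.coeff i (d⁄dX ℂ G) * PowerSeries.coeff (m - i) F := by
        intro i hi
        rw [Finset.mem_range] at hi
        rw [coeff_derivative, coeff_derivative, ih (i+1) (by omega), ih (m-i) (by omega)]
      rw [Finset.sum_congr rfl hsum, Nat.sub_self] at hE
      have hE2 : PowerSeries.coeff m (d⁄dX ℂ F) * PowerSeries.coeff 0 G
          = PowerSeries.coeff m (d⁄dX ℂ G) * PowerSeries.coeff 0 F := by
        exact add_left_cancel hE
      rw [h0, coeff_derivative, coeff_derivative] at hE2
      have hm1 : ((m:ℂ)+1) ≠ 0 := Nat.cast_add_one_ne_zero m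
      have := mul_right_cancel₀ hG0 hE2
      exact mul_right_cancel₀ hm1 this

lemma geom_mul (c : ℂ) :
    (PowerSeries.mk fun n => c ^ n) * (1 - PowerSeries.C c * PowerSeries.X) = 1 := by
  ext n
  rw [mul_sub, mul_one, map_sub, mul_left_comm, PowerSeries.coeff_C_mul]
  cases n with
  | zero => simp
  | succ m => simp [PowerSeries.coeff_succ_mul_X, PowerSeries.coeff_mk, PowerSeries.coeff_one, pow_succ, mul_comm]

lemma main_aux (a : PowerSeries ℂ) (ha : constantCoeff a = 0) (c u v : ℂ)
    (hS : d⁄dX ℂ a + d⁄dX ℂ (rescale c a)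
        = -(PowerSeries.C u * PowerSeries.mk (fun n => u ^ n)
            + PowerSeries.C v * PowerSeries.mk (fun n => v ^ n))) :
    expPS a * rescale c (expPS a)
      = (1 - PowerSeries.C u * PowerSeries.X) * (1 - PowerSeries.C v * PowerSeries.X) := by
  set G := (1 - PowerSeries.C u * PowerSeries.X) * (1 - PowerSeries.C v * PowerSeries.X) with hGdef
  have hrc : constantCoeff (rescale c a) = 0 := by
    rw [← coeff_zero_eq_constantCoeff_apply, coeff_rescale, pow_zero, one_mul,
      coeff_zero_eq_constantCoeff_apply, ha]
  have hG0 : PowerSeries.coeff 0 G = 1 := by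
    simp [hGdef, coeff_zero_eq_constantCoeff_apply]
  have hdX : d⁄dX ℂ (1 - PowerSeries.C u * PowerSeries.X) = -(PowerSeries.C u) := by
    rw [map_sub, Derivation.map_one_eq_zero]
    rw [Derivation.leibniz]
    simp [smul_eq_mul]
  have hdX' : d⁄dX ℂ (1 - PowerSeries.C v * PowerSeries.X) = -(PowerSeries.C v) := by
    rw [map_sub, Derivation.map_one_eq_zero]
    rw [Derivation.leibniz]
    simp [smul_eq_mul]
  have hdG : d⁄dX ℂ G = -(PowerSeries.C u * (1 - PowerSeries.C v * PowerSeries.X)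
      + PowerSeries.C v * (1 - PowerSeries.C u * PowerSeries.X)) := by
    rw [hGdef, Derivation.leibniz, hdX, hdX']
    simp only [smul_eq_mul]
    ring
  have hSG : (-(PowerSeries.C u * PowerSeries.mk (fun n => u ^ n)
            + PowerSeries.C v * PowerSeries.mk (fun n => v ^ n))) * G = d⁄dX ℂ G := by
    rw [hdG, hGdef]
    linear_combination (-(PowerSeries.C u * (1 - PowerSeries.C v * PowerSeries.X))) * geom_mul u
      + (-(PowerSeries.C v * (1 - PowerSeries.C u * PowerSeries.X))) * geom_mul v
  have hQ : rescale c (expPS a) = expPS (rescale c a) := rescale_expPS c a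
  have hdF : d⁄dX ℂ (expPS a * rescale c (expPS a))
      = (d⁄dX ℂ a + d⁄dX ℂ (rescale c a)) * (expPS a * rescale c (expPS a)) := by
    conv_lhs => rw [hQ, Derivation.leibniz]
    rw [derivative_expPS ha, derivative_expPS hrc]
    simp only [smul_eq_mul]
    rw [hQ]
    ring
  apply eq_of_deriv_rel
  · rw [hG0, coeff_zero_eq_constantCoeff_apply, map_mul, constantCoeff_expPS, hQ,
      constantCoeff_expPS, one_mul]
  · rw [hG0]; exact one_ne_zero
  · rw [hdF, hS]
    linear_combination (expPS a * rescale c (expPS a)) * hSG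

/-- The series f(z) = exp(-∑_{n≥1} (q1^n + q3^n)/(n(1+q2^{-n})) z^n). -/
noncomputable def fSeries (q1 q2 q3 : ℂ) : PowerSeries ℂ :=
  expPS (PowerSeries.mk fun n =>
    if n = 0 then 0 else -((q1 ^ n + q3 ^ n) / (n * (1 + (q2⁻¹) ^ n))))

/-- With q1q2q3 = 1, the identity f(z)·f(q2^{±1}z) = (1 - q1^{∓1}z)(1 - q3^{∓1}z)
holds as formal power series. -/
theorem stmt1 (q1 q2 q3 : ℂ) (h123 : q1 * q2 * q3 = 1)
    (hden : ∀ n : ℕ, 0 < n → 1 + (q2⁻¹) ^ n ≠ 0) :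
    fSeries q1 q2 q3 * PowerSeries.rescale q2 (fSeries q1 q2 q3)
      = (1 - PowerSeries.C q1⁻¹ * PowerSeries.X) *
        (1 - PowerSeries.C q3⁻¹ * PowerSeries.X) ∧
    fSeries q1 q2 q3 * PowerSeries.rescale q2⁻¹ (fSeries q1 q2 q3)
      = (1 - PowerSeries.C q1 * PowerSeries.X) *
        (1 - PowerSeries.C q3 * PowerSeries.X) := by
  have hq1 : q1 ≠ 0 := fun h => by simp [h] at h123
  have hq2 : q2 ≠ 0 := fun h => by simp [h] at h123
  have hq3 : q3 ≠ 0 := fun h => by simp [h] at h123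
  have e1 : q1⁻¹ = q2 * q3 := inv_eq_of_mul_eq_one_right (by linear_combination h123)
  have e2 : q2⁻¹ = q1 * q3 := inv_eq_of_mul_eq_one_right (by linear_combination h123)
  have e3 : q3⁻¹ = q1 * q2 := inv_eq_of_mul_eq_one_right (by linear_combination h123)
  set a : PowerSeries ℂ := PowerSeries.mk fun n =>
    if n = 0 then 0 else -((q1 ^ n + q3 ^ n) / (n * (1 + (q2⁻¹) ^ n))) with hadef
  have ha : constantCoeff a = 0 := by
    rw [hadef, ← coeff_zero_eq_constantCoeff_apply, PowerSeries.coeff_mk]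
    simp
  constructor
  · apply main_aux a ha q2 q1⁻¹ q3⁻¹
    ext n
    have hm : ((n:ℂ)+1) ≠ 0 := Nat.cast_add_one_ne_zero n
    have hD : (1 + (q2⁻¹)^(n+1) : ℂ) ≠ 0 := hden (n+1) (Nat.succ_pos n)
    rw [e2] at hD
    have hp : q1^(n+1) * q2^(n+1) * q3^(n+1) = 1 := by
      rw [← mul_pow, ← mul_pow, h123, one_pow]
    simp only [map_add, map_neg, coeff_derivative, coeff_rescale, hadef,
      PowerSeries.coeff_mk, PowerSeries.coeff_C_mul, Nat.succ_ne_zero, if_false, e1, e2, e3]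
    push_cast
    field_simp
    linear_combination (q1^(n+1)+q3^(n+1)) * hp
  · apply main_aux a ha q2⁻¹ q1 q3
    ext n
    have hm : ((n:ℂ)+1) ≠ 0 := Nat.cast_add_one_ne_zero n
    have hD : (1 + (q2⁻¹)^(n+1) : ℂ) ≠ 0 := hden (n+1) (Nat.succ_pos n)
    rw [e2] at hD
    have hp : q1^(n+1) * q2^(n+1) * q3^(n+1) = 1 := by
      rw [← mul_pow, ← mul_pow, h123, one_pow]
    simp only [map_add, map_neg, coeff_derivative, coeff_rescale, hadef,
      PowerSeries.coeff_mk, PowerSeries.coeff_C_mul, Nat.succ_ne_zero, if_false, e1, e2, e3]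
    push_cast
    field_simp
    ring
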